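/- Let K be a bounded self-adjoint linear operator on H satisfying the ill-posedness assumption with constant Q and the band structure assumption with bandwidth m, and suppose σ_j → 0 as j → ∞. Then K is a compact operator; in fact ‖K − K P_j‖ → 0 as j → ∞, so K is the operator-norm limit of the finite-rank operators K P_j. -/

import Mathlib

open MeasureTheory ProbabilityTheory Filter
open scoped RealInnerProductSpace BigOperators ENNReal NNReal

noncomputable section

/-- The approximation space `V_j`, the span of the basis vectors of level at most `j`. -/
def Vsub {ι H : Type*} [NormedAddCommGroup H] [InnerProductSpace ℝ H]
    (φ : ι → H) (lvl : ι → ℕ) (j : ℕ) : Submodule ℝ H :=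
  Submodule.span ℝ (φ '' {k | lvl k ≤ j})

/-- The orthogonal projection `P_j` onto `V_j`, as a continuous linear map on `H`. -/
def Pclm {ι H : Type*} [NormedAddCommGroup H] [InnerProductSpace ℝ H]
    (φ : ι → H) (lvl : ι → ℕ) (hfin : ∀ j, {k : ι | lvl k ≤ j}.Finite) (j : ℕ) :
    H →L[ℝ] H :=
  ∑ k ∈ (hfin j).toFinset, (innerSL ℝ (φ k)).smulRight (φ k)

theorem Pclm_mem {ι H : Type*} [NormedAddCommGroup H] [InnerProductSpace ℝ H]
    (φ : ι → H) (lvl : ι → ℕ) (hfin : ∀ j, {k : ι | lvl k ≤ j}.Finite) (j : ℕ) (f : H) :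
    Pclm φ lvl hfin j f ∈ Vsub φ lvl j := by
  have h : Pclm φ lvl hfin j f = ∑ k ∈ (hfin j).toFinset, ⟪φ k, f⟫ • φ k := by
    simp [Pclm, ContinuousLinearMap.sum_apply]
  rw [h]
  refine Submodule.sum_mem _ fun k hk => Submodule.smul_mem _ _ ?_
  exact Submodule.subset_span ⟨k, (hfin j).mem_toFinset.mp hk, rfl⟩

/-- The Galerkin projection `K_j := P_j K |_{V_j}` of an operator `K`, as a continuous
linear map from `V_j` to `V_j`. -/
def Kgal {ι H : Type*} [NormedAddCommGroup H] [InnerProductSpace ℝ H]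
    (φ : ι → H) (lvl : ι → ℕ) (hfin : ∀ j, {k : ι | lvl k ≤ j}.Finite)
    (K : H →L[ℝ] H) (j : ℕ) : Vsub φ lvl j →L[ℝ] Vsub φ lvl j :=
  ContinuousLinearMap.codRestrict
    ((Pclm φ lvl hfin j).comp (K.comp (Vsub φ lvl j).subtypeL))
    (Vsub φ lvl j) (fun _ => Pclm_mem φ lvl hfin j _)

section Aux

lemma rankOne_compact {H : Type*} [NormedAddCommGroup H] [InnerProductSpace ℝ H]
    (v y : H) : IsCompactOperator (⇑((innerSL ℝ v).smulRight y)) := by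
  rw [isCompactOperator_iff_exists_mem_nhds_image_subset_compact]
  refine ⟨Metric.closedBall 0 1, Metric.closedBall_mem_nhds 0 one_pos,
    (fun t : ℝ => t • y) '' Set.Icc (-‖v‖) ‖v‖,
    isCompact_Icc.image (by continuity), ?_⟩
  rintro _ ⟨x, hx, rfl⟩
  refine ⟨⟪v, x⟫, ?_, rfl⟩
  have hx' : ‖x‖ ≤ 1 := by simpa using hx
  have h := abs_le.mp (abs_real_inner_le_norm v x)
  have hv := norm_nonneg v
  constructor <;> nlinarith [h.1, h.2]

lemma finsetSum_rankOne_compact {ι H : Type*} [NormedAddCommGroup H]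
    [InnerProductSpace ℝ H] (φ : ι → H) (s : Finset ι) :
    IsCompactOperator (⇑(∑ k ∈ s, (innerSL ℝ (φ k)).smulRight (φ k))) := by
  classical
  induction s using Finset.induction with
  | empty => simpa using isCompactOperator_zero
  | @insert a s h ih =>
    rw [Finset.sum_insert h]
    have hadd := (rankOne_compact (φ a) (φ a)).add ih
    rwa [ContinuousLinearMap.coe_add']

end Aux

/-- a bounded self-adjoint operator satisfying the ill-posedness assumption
(with `σ_j → 0`) and the band structure assumption is compact; indeed `‖K - K P_j‖ → 0`,
so `K` is the operator-norm limit of the finite-rank operators `K P_j`. -/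
theorem stmt2 {ι H : Type*} [NormedAddCommGroup H] [InnerProductSpace ℝ H]
    [CompleteSpace H] [Countable ι]
    (φ : HilbertBasis ι ℝ H) (lvl : ι → ℕ)
    (hfin : ∀ j, {k : ι | lvl k ≤ j}.Finite)
    (σ : ℕ → ℝ) (hσpos : ∀ n, 0 < σ n) (hσanti : ∀ i n, i ≤ n → σ n ≤ σ i)
    (hσ0 : Tendsto σ atTop (nhds 0))
    (K : H →L[ℝ] H) (hsa : ∀ x y : H, ⟪K x, y⟫ = ⟪x, K y⟫)
    (Q : ℝ) (hQ : 0 < Q)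
    (hill : ∀ f : H,
      Q⁻¹ * (∑' k, σ (lvl k) * ⟪f, φ k⟫ ^ 2) ≤ ⟪K f, f⟫ ∧
      ⟪K f, f⟫ ≤ Q * (∑' k, σ (lvl k) * ⟪f, φ k⟫ ^ 2))
    (m : ℕ)
    (hband : ∀ k l : ι, (m : ℤ) < |(lvl l : ℤ) - (lvl k : ℤ)| → ⟪K (φ l), φ k⟫ = 0) :
    IsCompactOperator (⇑K) ∧
    (∀ j, FiniteDimensional ℝ
      (LinearMap.range ((K.comp (Pclm (⇑φ) lvl hfin j)).toLinearMap))) ∧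
    Tendsto (fun j => ‖K - K.comp (Pclm (⇑φ) lvl hfin j)‖) atTop (nhds 0) := by
  classical
  -- positivity of K
  have hpos : ∀ x : H, 0 ≤ ⟪K x, x⟫ := fun x =>
    le_trans (mul_nonneg (inv_nonneg.mpr hQ.le)
      (tsum_nonneg fun k => mul_nonneg (hσpos _).le (sq_nonneg _))) (hill x).1
  -- Cauchy-Schwarz for the positive form ⟪K·,·⟫
  have hCS : ∀ x y : H, ⟪K x, y⟫ ^ 2 ≤ ⟪K x, x⟫ * ⟪K y, y⟫ := by
    intro x y
    have h := discrim_le_zero (a := ⟪K y, y⟫) (b := 2 * ⟪K x, y⟫) (c := ⟪K x, x⟫) ?_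
    · rw [discrim] at h; nlinarith [h]
    · intro t
      have h1 : ⟪K y, x⟫ = ⟪K x, y⟫ := by
        rw [hsa y x]; exact real_inner_comm _ _
      have hexp : ⟪K (x + t • y), x + t • y⟫ =
          ⟪K y, y⟫ * (t * t) + 2 * ⟪K x, y⟫ * t + ⟪K x, x⟫ := by
        rw [map_add, K.map_smul, inner_add_left, inner_add_right, inner_add_right,
          real_inner_smul_left, real_inner_smul_left, real_inner_smul_right,
          real_inner_smul_right, h1]
        ring
      rw [← hexp]; exact hpos _
  -- norm bound for positive operators
  have hKg2 : ∀ g : H, ‖K g‖ ^ 2 ≤ ‖K‖ * ⟪K g, g⟫ := by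
    intro g
    by_cases h0 : ‖K g‖ = 0
    · rw [h0]
      simpa using mul_nonneg (norm_nonneg K) (hpos g)
    · have hKgpos : 0 < ‖K g‖ := lt_of_le_of_ne (norm_nonneg _) (Ne.symm h0)
      have h1 := hCS g (K g)
      have h2 : ⟪K g, K g⟫ = ‖K g‖ ^ 2 := real_inner_self_eq_norm_sq _
      have h3 : ⟪K (K g), K g⟫ ≤ ‖K‖ * ‖K g‖ ^ 2 := by
        calc ⟪K (K g), K g⟫ ≤ ‖K (K g)‖ * ‖K g‖ := real_inner_le_norm _ _
          _ ≤ (‖K‖ * ‖K g‖) * ‖K g‖ :=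
            mul_le_mul_of_nonneg_right (K.le_opNorm _) (norm_nonneg _)
          _ = ‖K‖ * ‖K g‖ ^ 2 := by ring
      rw [h2] at h1
      have h5 : ‖K g‖ ^ 2 * ‖K g‖ ^ 2 ≤ ‖K‖ * ⟪K g, g⟫ * ‖K g‖ ^ 2 := by
        nlinarith [h1, mul_le_mul_of_nonneg_left h3 (hpos g)]
      exact le_of_mul_le_mul_right h5 (pow_pos hKgpos 2)
  -- uniform bound ‖K - K P_j‖ ≤ √(‖K‖ Q σ(j+1))
  have key : ∀ j, ‖K - K.comp (Pclm (⇑φ) lvl hfin j)‖ ≤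
      Real.sqrt (‖K‖ * Q * σ (j + 1)) := by
    intro j
    refine ContinuousLinearMap.opNorm_le_bound _ (Real.sqrt_nonneg _) fun f => ?_
    set P := Pclm (⇑φ) lvl hfin j with hP
    set g := f - P f with hgdef
    have hPapply : ∀ x : H, P x = ∑ k ∈ (hfin j).toFinset, ⟪φ k, x⟫ • φ k := by
      intro x; simp [hP, Pclm, ContinuousLinearMap.sum_apply]
    have horth : ∀ k l : ι, ⟪φ k, φ l⟫ = if k = l then (1:ℝ) else 0 :=
      fun k l => orthonormal_iff_ite.mp φ.orthonormal k l
    -- coefficients of g vanish at low levels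
    have hg : ∀ k : ι, lvl k ≤ j → ⟪g, φ k⟫ = 0 := by
      intro k hk
      have hkmem : k ∈ (hfin j).toFinset := (hfin j).mem_toFinset.mpr hk
      have hPk : ⟪P f, φ k⟫ = ⟪f, φ k⟫ := by
        rw [hPapply, sum_inner, Finset.sum_eq_single k]
        · rw [real_inner_smul_left, horth k k, if_pos rfl, mul_one]
          exact real_inner_comm _ _
        · intro l _ hlk
          rw [real_inner_smul_left, horth l k, if_neg hlk, mul_zero]
        · intro h; exact absurd hkmem h
      rw [hgdef, inner_sub_left, hPk, sub_self]
    -- g ⟂ P f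
    have hgP : ⟪g, P f⟫ = 0 := by
      rw [hPapply, inner_sum]
      refine Finset.sum_eq_zero fun k hk => ?_
      rw [real_inner_smul_right, hg k ((hfin j).mem_toFinset.mp hk), mul_zero]
    -- ‖g‖ ≤ ‖f‖
    have hnormg : ‖g‖ ≤ ‖f‖ := by
      have hfgP : f = g + P f := by rw [hgdef]; abel
      have := norm_add_sq_real g (P f)
      rw [hgP] at this
      nlinarith [norm_nonneg g, norm_nonneg f, norm_nonneg (P f),
        congrArg norm hfgP.symm, this, sq_nonneg (‖P f‖)]
    -- Parseval for g
    have hpsg : HasSum (fun k => ⟪g, φ k⟫ ^ 2) (‖g‖ ^ 2) := by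
      have h := φ.hasSum_inner_mul_inner g g
      have heq : (fun i => ⟪g, φ i⟫ * ⟪φ i, g⟫) = fun i => ⟪g, φ i⟫ ^ 2 := by
        funext i; rw [real_inner_comm (φ i) g]; ring
      rw [heq, real_inner_self_eq_norm_sq] at h
      exact h
    -- tsum bound
    have hterm : ∀ k, σ (lvl k) * ⟪g, φ k⟫ ^ 2 ≤ σ (j + 1) * ⟪g, φ k⟫ ^ 2 := by
      intro k
      by_cases hk : lvl k ≤ j
      · rw [hg k hk]; simp
      · exact mul_le_mul_of_nonneg_right (hσanti (j + 1) (lvl k) (by omega)) (sq_nonneg _)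
    have hsum2 : Summable fun k => ⟪g, φ k⟫ ^ 2 := hpsg.summable
    have hsum1 : Summable fun k => σ (lvl k) * ⟪g, φ k⟫ ^ 2 :=
      Summable.of_nonneg_of_le (fun k => mul_nonneg (hσpos _).le (sq_nonneg _)) hterm
        (hsum2.mul_left _)
    have htsum : (∑' k, σ (lvl k) * ⟪g, φ k⟫ ^ 2) ≤ σ (j + 1) * ‖g‖ ^ 2 := by
      calc (∑' k, σ (lvl k) * ⟪g, φ k⟫ ^ 2)
          ≤ ∑' k, σ (j + 1) * ⟪g, φ k⟫ ^ 2 := Summable.tsum_le_tsum hterm hsum1 (hsum2.mul_left _)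
        _ = σ (j + 1) * ∑' k, ⟪g, φ k⟫ ^ 2 := tsum_mul_left
        _ = σ (j + 1) * ‖g‖ ^ 2 := by rw [hpsg.tsum_eq]
    have hKgg : ⟪K g, g⟫ ≤ Q * (σ (j + 1) * ‖g‖ ^ 2) :=
      le_trans (hill g).2 (mul_le_mul_of_nonneg_left htsum hQ.le)
    have hsq : ‖K g‖ ^ 2 ≤ (‖K‖ * Q * σ (j + 1)) * ‖f‖ ^ 2 := by
      have h1 := hKg2 g
      have h2 : ‖K‖ * ⟪K g, g⟫ ≤ ‖K‖ * (Q * (σ (j + 1) * ‖g‖ ^ 2)) :=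
        mul_le_mul_of_nonneg_left hKgg (norm_nonneg _)
      have h3 : ‖g‖ ^ 2 ≤ ‖f‖ ^ 2 := by nlinarith [norm_nonneg g, norm_nonneg f]
      nlinarith [norm_nonneg K, (hσpos (j + 1)).le, hQ.le,
        mul_nonneg (mul_nonneg (norm_nonneg K) hQ.le) (hσpos (j + 1)).le]
    have happly : (K - K.comp P) f = K g := by
      simp [hgdef, ContinuousLinearMap.sub_apply, map_sub]
    rw [happly]
    calc ‖K g‖ = Real.sqrt (‖K g‖ ^ 2) := (Real.sqrt_sq (norm_nonneg _)).symm
      _ ≤ Real.sqrt ((‖K‖ * Q * σ (j + 1)) * ‖f‖ ^ 2) := Real.sqrt_le_sqrt hsq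
      _ = Real.sqrt (‖K‖ * Q * σ (j + 1)) * ‖f‖ := by
          rw [Real.sqrt_mul (mul_nonneg (mul_nonneg (norm_nonneg K) hQ.le) (hσpos _).le), Real.sqrt_sq (norm_nonneg f)]
  -- the bound tends to 0
  have hCt : Tendsto (fun j => Real.sqrt (‖K‖ * Q * σ (j + 1))) atTop (nhds 0) := by
    have h1 : Tendsto (fun j => ‖K‖ * Q * σ (j + 1)) atTop (nhds 0) := by
      have := (hσ0.comp (tendsto_add_atTop_nat 1)).const_mul (‖K‖ * Q)
      simpa [Function.comp, mul_comm] using this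
    have h2 := (Real.continuous_sqrt.tendsto 0).comp h1
    simpa [Function.comp_def] using h2
  have hT : Tendsto (fun j => ‖K - K.comp (Pclm (⇑φ) lvl hfin j)‖) atTop (nhds 0) :=
    tendsto_of_tendsto_of_tendsto_of_le_of_le tendsto_const_nhds hCt
      (fun j => norm_nonneg _) key
  -- finite-dimensional ranges
  have hfd : ∀ j, FiniteDimensional ℝ
      (LinearMap.range ((K.comp (Pclm (⇑φ) lvl hfin j)).toLinearMap)) := by
    intro j
    haveI hVfd : FiniteDimensional ℝ (Vsub (⇑φ) lvl j) :=
      FiniteDimensional.span_of_finite ℝ ((hfin j).image _)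
    haveI : FiniteDimensional ℝ (Submodule.map K.toLinearMap (Vsub (⇑φ) lvl j)) :=
      Module.Finite.map _ _
    refine Submodule.finiteDimensional_of_le (S₂ := Submodule.map K.toLinearMap
      (Vsub (⇑φ) lvl j)) ?_
    rintro x ⟨f, rfl⟩
    exact ⟨Pclm (⇑φ) lvl hfin j f, Pclm_mem (⇑φ) lvl hfin j f, rfl⟩
  -- compactness
  have hcpt : ∀ j, IsCompactOperator (⇑(K.comp (Pclm (⇑φ) lvl hfin j))) := by
    intro j
    have hp : IsCompactOperator (⇑(Pclm (⇑φ) lvl hfin j)) :=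
      finsetSum_rankOne_compact (⇑φ) _
    exact hp.continuous_comp K.continuous
  have hKlim : Tendsto (fun j => K.comp (Pclm (⇑φ) lvl hfin j)) atTop (nhds K) := by
    rw [tendsto_iff_norm_sub_tendsto_zero]
    simpa [norm_sub_rev] using hT
  exact ⟨isCompactOperator_of_tendsto hKlim (Eventually.of_forall hcpt), hfd, hT⟩
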